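/- If a commutative (nonassociative) algebra A over a field of characteristic zero satisfies the identity t_3(a_1,a_2,a_3) = (a_1a_2)a_3 + (a_1a_3)a_2 + a_1(a_2a_3) = 0, then it also satisfies t_4 = 0, and hence t_d = 0 for all d ≥ 3. -/

import Mathlib

/-- `tb f fuel l`: fuel-based recursion computing the sum of all distinct multilinear
monomials on the entries of `l` for a commutative binary operation `f`:
`tₙ = Σ_{I⊔J={1,…,n}, 1∈I, I,J≠∅} t_{|I|}(a_I)·t_{|J|}(a_J)`. -/
def tb {A : Type*} [AddCommMonoid A] (f : A → A → A) : ℕ → List A → A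
  | 0, _ => 0
  | _ + 1, [a] => a
  | fuel + 1, l =>
      ∑ I ∈ (Finset.range l.length).powerset.filter
          (fun I => 0 ∈ I ∧ I ≠ Finset.range l.length),
        f (tb f fuel ((I.sort (· ≤ ·)).map (fun i => l.getD i 0)))
          (tb f fuel ((((Finset.range l.length) \ I).sort (· ≤ ·)).map (fun i => l.getD i 0)))

/-- `Tb f [a₁,…,aₙ] = tₙ(a₁,…,aₙ)`, the sum of all distinct multilinear degree-`n`
monomials for the commutative product `f`. -/
def Tb {A : Type*} [AddCommMonoid A] (f : A → A → A) (l : List A) : A :=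
  tb f l.length l

section Aux

variable {A : Type*} [AddCommMonoid A] (f : A → A → A)

lemma tb_single (n : ℕ) (a : A) : tb f (n+1) [a] = a := rfl

lemma tb_cons2 (n : ℕ) (x y : A) (t : List A) :
    tb f (n+1) (x::y::t) =
      ∑ I ∈ (Finset.range (x::y::t).length).powerset.filter
          (fun I => 0 ∈ I ∧ I ≠ Finset.range (x::y::t).length),
        f (tb f n ((I.sort (· ≤ ·)).map (fun i => (x::y::t).getD i 0)))
          (tb f n ((((Finset.range (x::y::t).length) \ I).sort (· ≤ ·)).map
            (fun i => (x::y::t).getD i 0))) := rfl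

lemma sortp (s : Finset ℕ) (l : List ℕ) (h : s.val = ↑l) (h2 : l.Pairwise (· ≤ ·)) :
    Finset.sort s (· ≤ ·) = l := by
  have hs := Finset.pairwise_sort (s := s) (r := (· ≤ ·))
  have hp : List.Perm (Finset.sort s (· ≤ ·)) l := by
    rw [← Multiset.coe_eq_coe, Finset.sort_eq, h]
  exact hp.eq_of_pairwise' hs h2

lemma tb2 (n : ℕ) (a b : A) : tb f (n+2) [a,b] = f a b := by
  show (∑ I ∈ (Finset.range [a,b].length).powerset.filter
      (fun I => 0 ∈ I ∧ I ≠ Finset.range [a,b].length),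
    f (tb f (n+1) ((I.sort (· ≤ ·)).map (fun i => [a,b].getD i 0)))
      (tb f (n+1) ((((Finset.range [a,b].length) \ I).sort (· ≤ ·)).map (fun i => [a,b].getD i 0)))) = f a b
  rw [show ([a,b] : List A).length = 2 from rfl]
  rw [show (Finset.range 2).powerset.filter (fun I => 0 ∈ I ∧ I ≠ Finset.range 2) = {{0}} from by decide]
  rw [Finset.sum_singleton]
  rw [show Finset.range 2 \ ({0} : Finset ℕ) = {1} from by decide]
  rw [Finset.sort_singleton, Finset.sort_singleton]
  simp only [List.map]
  rw [tb_single, tb_single]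
  rfl

lemma tb3 (n : ℕ) (a b c : A) : tb f (n+3) [a,b,c] =
    f a (f b c) + f (f a b) c + f (f a c) b := by
  show (∑ I ∈ (Finset.range [a,b,c].length).powerset.filter
      (fun I => 0 ∈ I ∧ I ≠ Finset.range [a,b,c].length),
    f (tb f (n+2) ((I.sort (· ≤ ·)).map (fun i => [a,b,c].getD i 0)))
      (tb f (n+2) ((((Finset.range [a,b,c].length) \ I).sort (· ≤ ·)).map (fun i => [a,b,c].getD i 0))))
    = f a (f b c) + f (f a b) c + f (f a c) b
  rw [show ([a,b,c] : List A).length = 3 from rfl]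
  rw [show (Finset.range 3).powerset.filter (fun I => 0 ∈ I ∧ I ≠ Finset.range 3) = {{0},{0,1},{0,2}} from by decide]
  rw [Finset.sum_insert (by decide), Finset.sum_insert (by decide), Finset.sum_singleton]
  rw [show Finset.range 3 \ ({0} : Finset ℕ) = {1,2} from by decide,
      show Finset.range 3 \ ({0,1} : Finset ℕ) = {2} from by decide,
      show Finset.range 3 \ ({0,2} : Finset ℕ) = {1} from by decide]
  rw [sortp {0,1} [0,1] (by decide) (by decide),
      sortp {0,2} [0,2] (by decide) (by decide),
      sortp {1,2} [1,2] (by decide) (by decide),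
      Finset.sort_singleton, Finset.sort_singleton, Finset.sort_singleton]
  simp only [List.map]
  rw [tb_single, tb_single, tb_single]
  show f a (tb f (n+2) [b,c]) + (f (tb f (n+2) [a,b]) c + f (tb f (n+2) [a,c]) b)
      = f a (f b c) + f (f a b) c + f (f a c) b
  rw [tb2, tb2, tb2, add_assoc]

lemma tb4 (n : ℕ) (a b c d : A) : tb f (n+4) [a,b,c,d] =
    f a (tb f (n+3) [b,c,d]) + f (f a b) (f c d) + f (f a c) (f b d) + f (f a d) (f b c)
    + f (tb f (n+3) [a,b,c]) d + f (tb f (n+3) [a,b,d]) c + f (tb f (n+3) [a,c,d]) b := by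
  show (∑ I ∈ (Finset.range [a,b,c,d].length).powerset.filter
      (fun I => 0 ∈ I ∧ I ≠ Finset.range [a,b,c,d].length),
    f (tb f (n+3) ((I.sort (· ≤ ·)).map (fun i => [a,b,c,d].getD i 0)))
      (tb f (n+3) ((((Finset.range [a,b,c,d].length) \ I).sort (· ≤ ·)).map (fun i => [a,b,c,d].getD i 0)))) = _
  rw [show ([a,b,c,d] : List A).length = 4 from rfl]
  rw [show (Finset.range 4).powerset.filter (fun I => 0 ∈ I ∧ I ≠ Finset.range 4)
      = {{0},{0,1},{0,2},{0,3},{0,1,2},{0,1,3},{0,2,3}} from by decide]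
  rw [Finset.sum_insert (by decide), Finset.sum_insert (by decide), Finset.sum_insert (by decide),
      Finset.sum_insert (by decide), Finset.sum_insert (by decide), Finset.sum_insert (by decide),
      Finset.sum_singleton]
  rw [show Finset.range 4 \ ({0} : Finset ℕ) = {1,2,3} from by decide,
      show Finset.range 4 \ ({0,1} : Finset ℕ) = {2,3} from by decide,
      show Finset.range 4 \ ({0,2} : Finset ℕ) = {1,3} from by decide,
      show Finset.range 4 \ ({0,3} : Finset ℕ) = {1,2} from by decide,
      show Finset.range 4 \ ({0,1,2} : Finset ℕ) = {3} from by decide,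
      show Finset.range 4 \ ({0,1,3} : Finset ℕ) = {2} from by decide,
      show Finset.range 4 \ ({0,2,3} : Finset ℕ) = {1} from by decide]
  rw [sortp {0,1} [0,1] (by decide) (by decide),
      sortp {0,2} [0,2] (by decide) (by decide),
      sortp {0,3} [0,3] (by decide) (by decide),
      sortp {0,1,2} [0,1,2] (by decide) (by decide),
      sortp {0,1,3} [0,1,3] (by decide) (by decide),
      sortp {0,2,3} [0,2,3] (by decide) (by decide),
      sortp {1,2} [1,2] (by decide) (by decide),
      sortp {1,3} [1,3] (by decide) (by decide),
      sortp {2,3} [2,3] (by decide) (by decide),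
      sortp {1,2,3} [1,2,3] (by decide) (by decide),
      Finset.sort_singleton, Finset.sort_singleton, Finset.sort_singleton, Finset.sort_singleton]
  simp only [List.map]
  rw [tb_single, tb_single, tb_single, tb_single]
  show f a (tb f (n+3) [b,c,d]) + (f (tb f (n+3) [a,b]) (tb f (n+3) [c,d]) +
      (f (tb f (n+3) [a,c]) (tb f (n+3) [b,d]) + (f (tb f (n+3) [a,d]) (tb f (n+3) [b,c]) +
      (f (tb f (n+3) [a,b,c]) d + (f (tb f (n+3) [a,b,d]) c + f (tb f (n+3) [a,c,d]) b))))) = _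
  rw [show (n+3) = (n+1)+2 from rfl]
  rw [tb2, tb2, tb2, tb2, tb2, tb2]
  abel

lemma tb_fuel : ∀ N (f₁ f₂ : ℕ) (l : List A), l.length ≤ N → 1 ≤ l.length →
    l.length ≤ f₁ → l.length ≤ f₂ → tb f f₁ l = tb f f₂ l := by
  intro N
  induction N with
  | zero => intro _ _ l h h1 _ _; omega
  | succ N ih =>
    intro f₁ f₂ l hN h1 hf₁ hf₂
    match l with
    | [a] =>
      obtain ⟨m₁, rfl⟩ : ∃ m, f₁ = m + 1 := ⟨f₁ - 1, by simp at hf₁; omega⟩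
      obtain ⟨m₂, rfl⟩ : ∃ m, f₂ = m + 1 := ⟨f₂ - 1, by simp at hf₂; omega⟩
      rw [tb_single, tb_single]
    | x :: y :: t =>
      simp only [List.length_cons] at hN hf₁ hf₂
      obtain ⟨m₁, rfl⟩ : ∃ m, f₁ = m + 1 := ⟨f₁ - 1, by omega⟩
      obtain ⟨m₂, rfl⟩ : ∃ m, f₂ = m + 1 := ⟨f₂ - 1, by omega⟩
      rw [tb_cons2, tb_cons2]
      apply Finset.sum_congr rfl
      intro I hI
      simp only [Finset.mem_filter, Finset.mem_powerset] at hI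
      obtain ⟨hsub, h0, hne⟩ := hI
      have hcard : I.card < (x::y::t).length := by
        have h := Finset.card_lt_card (show I ⊂ Finset.range (x::y::t).length by
          rw [Finset.ssubset_iff_subset_ne]; exact ⟨hsub, hne⟩)
        simpa using h
      have hcards : 0 < I.card := Finset.card_pos.mpr ⟨0, h0⟩
      have hJcard : ((Finset.range (x::y::t).length) \ I).card
          = (x::y::t).length - I.card := by
        rw [Finset.card_sdiff_of_subset hsub, Finset.card_range]
      have hlen : (x::y::t).length = t.length + 2 := by simp
      congr 1
      · apply ih
        · rw [List.length_map, Finset.length_sort]; omega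
        · rw [List.length_map, Finset.length_sort]; omega
        · rw [List.length_map, Finset.length_sort]; omega
        · rw [List.length_map, Finset.length_sort]; omega
      · apply ih
        · rw [List.length_map, Finset.length_sort]; omega
        · rw [List.length_map, Finset.length_sort]; omega
        · rw [List.length_map, Finset.length_sort]; omega
        · rw [List.length_map, Finset.length_sort]; omega

lemma tb_eq_Tb (fuel : ℕ) (l : List A) (h1 : 1 ≤ l.length) (h2 : l.length ≤ fuel) :
    tb f fuel l = Tb f l :=
  tb_fuel f l.length fuel l.length l le_rfl h1 h2 le_rfl

end Aux

/-- If a commutative (nonassociative) algebra over `ℚ` satisfies the identity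
`t₃(a₁,a₂,a₃) = (a₁a₂)a₃ + (a₁a₃)a₂ + a₁(a₂a₃) = 0`, then it also satisfies
`t₄ = 0`, and hence `t_d = 0` for all `d ≥ 3`. -/
theorem weakly_nil_three_of_t3 {A : Type*} [NonUnitalNonAssocRing A]
    [Module ℚ A] [SMulCommClass ℚ A A] [IsScalarTower ℚ A A]
    (hcomm : ∀ a b : A, a * b = b * a)
    (h3 : ∀ a b c : A, (a * b) * c + (a * c) * b + a * (b * c) = 0) :
    ∀ d, 3 ≤ d → ∀ l : List A, l.length = d → Tb (· * ·) l = 0 := by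
  have ht3 : ∀ n (a b c : A), tb (· * ·) (n+3) [a,b,c] = 0 := by
    intro n a b c
    rw [tb3]
    show a * (b * c) + (a * b) * c + (a * c) * b = 0
    rw [← h3 a b c]; abel
  have ht4 : ∀ n (a b c d : A), tb (· * ·) (n+4) [a,b,c,d] = 0 := by
    intro n a b c d
    rw [tb4, ht3, ht3, ht3, ht3]
    show a * 0 + (a * b) * (c * d) + (a * c) * (b * d) + (a * d) * (b * c)
        + 0 * d + 0 * c + 0 * b = 0
    rw [mul_zero, zero_mul, zero_mul, zero_mul, zero_add, add_zero, add_zero, add_zero]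
    -- the genuine degree-4 identity
    have hA1 := h3 (a*b) c d
    have hA2 := h3 (a*c) b d
    have hA3 := h3 (a*d) b c
    have hC1 : ((a*c)*d)*b + ((a*d)*c)*b + b*(a*(c*d)) = 0 := by
      have h := congrArg (fun x => b * x) (h3 a c d)
      simp only [mul_zero, mul_add] at h
      rw [hcomm b ((a*c)*d), hcomm b ((a*d)*c)] at h
      exact h
    have hC2 : ((a*b)*d)*c + ((a*d)*b)*c + c*(a*(b*d)) = 0 := by
      have h := congrArg (fun x => c * x) (h3 a b d)
      simp only [mul_zero, mul_add] at h
      rw [hcomm c ((a*b)*d), hcomm c ((a*d)*b)] at h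
      exact h
    have hC3 : ((a*b)*c)*d + ((a*c)*b)*d + d*(a*(b*c)) = 0 := by
      have h := congrArg (fun x => d * x) (h3 a b c)
      simp only [mul_zero, mul_add] at h
      rw [hcomm d ((a*b)*c), hcomm d ((a*c)*b)] at h
      exact h
    have hD1 : (a*b)*(c*d) + b*(a*(c*d)) + a*(b*(c*d)) = 0 := by
      have h := h3 a b (c*d)
      rw [hcomm (a*(c*d)) b] at h
      exact h
    have hD2 : (a*c)*(b*d) + c*(a*(b*d)) + a*(c*(b*d)) = 0 := by
      have h := h3 a c (b*d)
      rw [hcomm (a*(b*d)) c] at h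
      exact h
    have hD3 : (a*d)*(b*c) + d*(a*(b*c)) + a*(d*(b*c)) = 0 := by
      have h := h3 a d (b*c)
      rw [hcomm (a*(b*c)) d] at h
      exact h
    have hB : a*(d*(b*c)) + a*(c*(b*d)) + a*(b*(c*d)) = 0 := by
      have h := congrArg (fun x => a * x) (h3 b c d)
      simp only [mul_zero, mul_add] at h
      rw [hcomm (b*c) d, hcomm (b*d) c] at h
      exact h
    have h2Q : ((a*b)*(c*d) + (a*c)*(b*d) + (a*d)*(b*c))
        + ((a*b)*(c*d) + (a*c)*(b*d) + (a*d)*(b*c)) = 0 := by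
      have key : ((a*b)*(c*d) + (a*c)*(b*d) + (a*d)*(b*c))
          + ((a*b)*(c*d) + (a*c)*(b*d) + (a*d)*(b*c))
          = (((a*b)*c)*d + ((a*b)*d)*c + (a*b)*(c*d))
            + (((a*c)*b)*d + ((a*c)*d)*b + (a*c)*(b*d))
            + (((a*d)*b)*c + ((a*d)*c)*b + (a*d)*(b*c))
            + ((a*b)*(c*d) + b*(a*(c*d)) + a*(b*(c*d)))
            + ((a*c)*(b*d) + c*(a*(b*d)) + a*(c*(b*d)))
            + ((a*d)*(b*c) + d*(a*(b*c)) + a*(d*(b*c)))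
            - (((a*c)*d)*b + ((a*d)*c)*b + b*(a*(c*d)))
            - (((a*b)*d)*c + ((a*d)*b)*c + c*(a*(b*d)))
            - (((a*b)*c)*d + ((a*c)*b)*d + d*(a*(b*c)))
            - (a*(d*(b*c)) + a*(c*(b*d)) + a*(b*(c*d))) := by abel
      rw [key, hA1, hA2, hA3, hD1, hD2, hD3, hC1, hC2, hC3, hB]
      abel
    have h2 : (2:ℚ) • ((a*b)*(c*d) + (a*c)*(b*d) + (a*d)*(b*c)) = 0 := by
      rw [two_smul]; exact h2Q
    have h2' : ((2:ℚ)⁻¹ * 2) • ((a*b)*(c*d) + (a*c)*(b*d) + (a*d)*(b*c))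
        = (2:ℚ)⁻¹ • (0:A) := by
      rw [← smul_smul]; exact congrArg _ h2
    rw [show ((2:ℚ)⁻¹ * 2) = 1 by norm_num, one_smul, smul_zero] at h2'
    exact h2'
  intro d
  induction d using Nat.strong_induction_on with
  | _ d IH =>
    intro hd l hl
    rcases d with _|_|_|_|_|d
    · omega
    · omega
    · omega
    · -- d = 3
      rcases l with _|⟨a,_|⟨b,_|⟨c,_|⟨e,t⟩⟩⟩⟩ <;> simp only [List.length_cons, List.length_nil] at hl <;> try (exfalso; omega)
      show tb (· * ·) ([a,b,c]).length [a,b,c] = 0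
      rw [show ([a,b,c] : List A).length = 0+3 from rfl]
      exact ht3 0 a b c
    · -- d = 4
      rcases l with _|⟨a,_|⟨b,_|⟨c,_|⟨e,_|⟨x,t⟩⟩⟩⟩⟩ <;> simp only [List.length_cons, List.length_nil] at hl <;> try (exfalso; omega)
      show tb (· * ·) ([a,b,c,e]).length [a,b,c,e] = 0
      rw [show ([a,b,c,e] : List A).length = 0+4 from rfl]
      exact ht4 0 a b c e
    · -- d ≥ 5
      rcases l with _|⟨x,_|⟨y,t⟩⟩ <;> simp only [List.length_cons, List.length_nil] at hl <;> try (exfalso; omega)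
      show tb (· * ·) ((x::y::t).length) (x::y::t) = 0
      rw [show ((x::y::t) : List A).length = (t.length+1)+1 from rfl]
      rw [tb_cons2]
      apply Finset.sum_eq_zero
      intro I hI
      simp only [Finset.mem_filter, Finset.mem_powerset] at hI
      obtain ⟨hsub, h0, hne⟩ := hI
      have hlen : (x::y::t).length = t.length + 2 := by simp
      have hcard : I.card < (x::y::t).length := by
        have h := Finset.card_lt_card (show I ⊂ Finset.range (x::y::t).length by
          rw [Finset.ssubset_iff_subset_ne]; exact ⟨hsub, hne⟩)
        simpa using h
      have hcards : 0 < I.card := Finset.card_pos.mpr ⟨0, h0⟩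
      have hJcard : ((Finset.range (x::y::t).length) \ I).card
          = (x::y::t).length - I.card := by
        rw [Finset.card_sdiff_of_subset hsub, Finset.card_range]
      set lI := (I.sort (· ≤ ·)).map (fun i => (x::y::t).getD i 0) with hlI
      set lJ := (((Finset.range (x::y::t).length) \ I).sort (· ≤ ·)).map
          (fun i => (x::y::t).getD i 0) with hlJ
      have hlenI : lI.length = I.card := by
        rw [hlI, List.length_map, Finset.length_sort]
      have hlenJ : lJ.length = (x::y::t).length - I.card := by
        rw [hlJ, List.length_map, Finset.length_sort, hJcard]
      have hd5 : 5 ≤ (x::y::t).length := by omega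
      rcases le_or_gt 3 I.card with h3I | h3I
      · have hz : tb (· * ·) (t.length+1) lI = 0 := by
          rw [tb_eq_Tb (· * ·) (t.length+1) lI (by omega) (by omega)]
          exact IH lI.length (by omega) (by omega) lI rfl
        simp [hz]
      · have hz : tb (· * ·) (t.length+1) lJ = 0 := by
          rw [tb_eq_Tb (· * ·) (t.length+1) lJ (by omega) (by omega)]
          exact IH lJ.length (by omega) (by omega) lJ rfl
        simp [hz]
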